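/- Let s ∈ (0,1), a := 1 − 2s, u ∈ C^∞(ℝ^n) ∩ W^{2,∞}(ℝ^n), and let U be the unique bounded solution of the extension problem for u. Let η̄_R be as in the standard cutoff setup, let e ∈ ℝ^n be a unit vector, and for (x,y) ∈ ℝ^{n+1}_+ set Ψ₂(x,y) := η̄_R²(x)(∂²_e U(x,y))₊². Then there exists a constant C, depending only on n and ‖η̄‖_{C²(ℝ^n)}, such that L_a Ψ₂ ≤ C χ_{B_{R/2}}(x) R^{-2} y^a (∂²_e U)² everywhere in ℝ^{n+1}_+, where at points where Ψ₂ is only C^{1,1} the operator L_a is computed in nondivergence form with the Laplacian defined via the liminf of second incremental quotients. -/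

import Mathlib

open MeasureTheory Filter Metric Set

noncomputable section

/-- Euclidean space `ℝⁿ`. -/
abbrev En (n : ℕ) := EuclideanSpace ℝ (Fin n)

/-- The (closed) upper half space `ℝ^{n+1}` is modelled by `En n × ℝ`,
with points `p = (x, y)`. -/
abbrev Hn (n : ℕ) := En n × ℝ

/-- Horizontal partial derivative `∂_{x_i} V`. -/
def pdX (n : ℕ) (V : Hn n → ℝ) (p : Hn n) (i : Fin n) : ℝ :=
  fderiv ℝ V p (EuclideanSpace.single i 1, 0)

/-- Vertical partial derivative `∂_y V`. -/
def pdY (n : ℕ) (V : Hn n → ℝ) (p : Hn n) : ℝ :=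
  fderiv ℝ V p ((0 : En n), (1:ℝ))

/-- The (Euclidean) squared length of the full gradient `|∇V|²` in `ℝ^{n+1}`. -/
def gradSq (n : ℕ) (V : Hn n → ℝ) (p : Hn n) : ℝ :=
  (∑ i, (pdX n V p i)^2) + (pdY n V p)^2

/-- The Laplacian `ΔV` in `ℝ^{n+1}` (for smooth `V`). -/
def lapH (n : ℕ) (V : Hn n → ℝ) (p : Hn n) : ℝ :=
  (∑ i, pdX n (fun q => pdX n V q i) p i) + pdY n (fun q => pdY n V q) p

/-- The extension operator `L_a V = −div(y^a ∇V) = −y^a ΔV − a y^{a−1} ∂_y V`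
(in nondivergence form, for functions that are smooth where it is evaluated). -/
def La (n : ℕ) (a : ℝ) (V : Hn n → ℝ) (p : Hn n) : ℝ :=
  -(p.2 ^ a * lapH n V p + a * p.2 ^ (a - 1) * pdY n V p)

/-- Directional derivative `∂_e V` of a function on the half space along a horizontal
unit direction `e ∈ ℝⁿ`. -/
def pdE (n : ℕ) (e : En n) (V : Hn n → ℝ) (p : Hn n) : ℝ := fderiv ℝ V p (e, 0)

/-- `‖η‖_{C²(ℝⁿ)} ≤ M`. -/
def C2BddBy (n : ℕ) (η : En n → ℝ) (M : ℝ) : Prop :=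
  ∀ x : En n, |η x| ≤ M ∧ ‖fderiv ℝ η x‖ ≤ M ∧ ‖fderiv ℝ (fderiv ℝ η) x‖ ≤ M

/-- `U` is a bounded solution of the extension problem for `u`:
`div(y^a ∇U) = 0` in `ℝ^{n+1}_+` and `U(·,0) = u`. -/
def IsBoundedExtension (n : ℕ) (a : ℝ) (u : En n → ℝ) (U : Hn n → ℝ) : Prop :=
  ContinuousOn U {p : Hn n | 0 ≤ p.2} ∧
  ContDiffOn ℝ (⊤ : ℕ∞) U {p : Hn n | 0 < p.2} ∧
  (∀ x : En n, U (x, 0) = u x) ∧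
  (∃ M : ℝ, ∀ p : Hn n, 0 ≤ p.2 → |U p| ≤ M) ∧
  (∀ p : Hn n, 0 < p.2 → La n a U p = 0)

/-- `(-Δ)V(p)` in `ℝ^{n+1}` computed through the liminf of second incremental
quotients (which equals `-ΔV(p)` whenever `V` is `C²` near `p`). -/
def negLapIncH (n : ℕ) (V : Hn n → ℝ) (p : Hn n) : ℝ :=
  Filter.liminf (fun h : ℝ =>
      (∑ i : Fin n,
        (2 * V p - V (p + h • ((EuclideanSpace.single i 1 : En n), (0:ℝ)))
          - V (p - h • ((EuclideanSpace.single i 1 : En n), (0:ℝ)))) / h^2)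
      + (2 * V p - V (p + h • ((0 : En n), (1:ℝ)))
          - V (p - h • ((0 : En n), (1:ℝ)))) / h^2)
    (nhdsWithin (0:ℝ) (Set.Ioi 0))

/-- The operator `L_a` in nondivergence form, with the Laplacian computed through the
liminf of second incremental quotients (suitable for functions that are only `C^{1,1}`):
`L_a V = y^a (−ΔV) − a y^{a−1} ∂_y V`. -/
def LaInc (n : ℕ) (a : ℝ) (V : Hn n → ℝ) (p : Hn n) : ℝ :=
  p.2 ^ a * negLapIncH n V p - a * p.2 ^ (a - 1) * pdY n V p

/-- estimate for `Ψ₂ = η̄_R² ((∂²_e U)₊)²` in the extended space: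
`L_a Ψ₂ ≤ C χ_{B_{R/2}} R⁻² y^a (∂²_e U)²` everywhere in `ℝ^{n+1}_+`, with
`C = C(n, ‖η̄‖_{C²})`, the operator being computed in nondivergence form with the
Laplacian defined via the liminf of second incremental quotients. -/

lemma hasDerivAt_maxsq (t : ℝ) :
    HasDerivAt (fun t : ℝ => (max t 0)^2) (2 * max t 0) t := by
  rcases lt_trichotomy t 0 with ht | rfl | ht
  · have he : (fun s : ℝ => (max s 0)^2) =ᶠ[nhds t] fun _ => (0:ℝ) := by
      filter_upwards [Iio_mem_nhds ht] with s hs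
      simp [max_eq_right (le_of_lt (mem_Iio.1 hs))]
    rw [max_eq_right ht.le, mul_zero]
    exact (hasDerivAt_const t (0:ℝ)).congr_of_eventuallyEq he
  · rw [max_self, mul_zero]
    rw [hasDerivAt_iff_isLittleO]
    simp only [sub_zero, max_self, ne_eq, zero_pow, smul_zero]
    rw [Asymptotics.isLittleO_iff]
    intro c hc
    filter_upwards [Metric.ball_mem_nhds (0:ℝ) hc] with h hh
    simp only [Metric.mem_ball, Real.dist_eq, sub_zero] at hh
    have h1 : |max h 0| ≤ |h| := by
      rcases le_or_gt h 0 with h' | h'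
      · simp [max_eq_right h', abs_nonneg]
      · simp [max_eq_left h'.le]
    have : ‖(max h 0)^2 - 0^2‖ = |max h 0| * |max h 0| := by
      rw [show ((0:ℝ)^2) = 0 from by norm_num, sub_zero, Real.norm_eq_abs, sq, abs_mul]
    rw [this]
    calc |max h 0| * |max h 0| ≤ c * |h| :=
          mul_le_mul (le_trans h1 hh.le) h1 (abs_nonneg _) hc.le
      _ = c * ‖h‖ := by simp
  · have he : (fun s : ℝ => (max s 0)^2) =ᶠ[nhds t] fun s => s^2 := by
      filter_upwards [Ioi_mem_nhds ht] with s hs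
      simp [max_eq_left (le_of_lt (mem_Ioi.1 hs))]
    rw [max_eq_left ht.le]
    have h2 : HasDerivAt (fun s : ℝ => s^2) (2*t) t := by
      simpa using (hasDerivAt_pow 2 t)
    exact h2.congr_of_eventuallyEq he


lemma symmQuot_tendsto {φ φ' : ℝ → ℝ} {L δ : ℝ} (hδ : 0 < δ)
    (h1 : ∀ t ∈ Set.Ioo (-δ) δ, HasDerivAt φ (φ' t) t)
    (h2 : HasDerivAt φ' L 0) :
    Tendsto (fun h => (2 * φ 0 - φ h - φ (-h)) / h^2)
      (nhdsWithin 0 (Set.Ioi 0)) (nhds (-L)) := by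
  set S : ℝ → ℝ := fun ξ => (φ' ξ - φ' (-ξ)) / (2*ξ) with hSdef
  have hslope : Tendsto (slope φ' 0) (nhdsWithin 0 {(0:ℝ)}ᶜ) (nhds L) :=
    hasDerivAt_iff_tendsto_slope.1 h2
  have hid : Tendsto (fun ξ : ℝ => ξ) (nhdsWithin 0 (Set.Ioi 0)) (nhdsWithin 0 {(0:ℝ)}ᶜ) := by
    apply tendsto_id.mono_right
    apply nhdsWithin_mono
    intro x hx
    exact (ne_of_gt hx)
  have hneg : Tendsto (fun ξ : ℝ => -ξ) (nhdsWithin 0 (Set.Ioi 0)) (nhdsWithin 0 {(0:ℝ)}ᶜ) := by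
    rw [tendsto_nhdsWithin_iff]
    constructor
    · have : Tendsto (fun ξ : ℝ => -ξ) (nhds 0) (nhds (-0)) := (continuous_neg.tendsto 0)
      simpa using this.mono_left nhdsWithin_le_nhds
    · filter_upwards [self_mem_nhdsWithin] with ξ hξ
      simp only [mem_compl_iff, mem_singleton_iff, neg_eq_zero]
      exact (ne_of_gt hξ)
  have hStend : Tendsto S (nhdsWithin 0 (Set.Ioi 0)) (nhds L) := by
    have ht := (((hslope.comp hid).add (hslope.comp hneg)).div_const 2)
    have hLL : (L + L)/2 = L := by ring
    rw [hLL] at ht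
    apply ht.congr'
    filter_upwards [self_mem_nhdsWithin] with ξ hξ
    have hξ0 : ξ ≠ 0 := ne_of_gt hξ
    simp only [Function.comp, slope_def_field, hSdef, sub_zero]
    rw [div_neg, ← neg_div, neg_sub, ← add_div, div_div]
    ring_nf
  rw [Metric.tendsto_nhds]
  intro ε hε
  have hT : {ξ | dist (S ξ) L < ε} ∈ nhdsWithin 0 (Set.Ioi 0) :=
    Metric.tendsto_nhds.1 hStend ε hε
  rw [mem_nhdsGT_iff_exists_Ioo_subset] at hT
  obtain ⟨u, hu, hsub⟩ := hT
  have hu0 : (0:ℝ) < u := hu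
  set δ' := min u δ with hδ'
  have hδ'0 : 0 < δ' := lt_min hu0 hδ
  have hmem : Set.Ioo 0 δ' ∈ nhdsWithin 0 (Set.Ioi 0) := by
    rw [mem_nhdsGT_iff_exists_Ioo_subset]
    exact ⟨δ', hδ'0, subset_rfl⟩
  filter_upwards [hmem] with h hh
  obtain ⟨hh0, hhδ'⟩ := hh
  have hhδ : h < δ := lt_of_lt_of_le hhδ' (min_le_right _ _)
  have hhu : h < u := lt_of_lt_of_le hhδ' (min_le_left _ _)
  -- ψ and its derivative
  set ψ : ℝ → ℝ := fun t => φ t + φ (-t) - 2 * φ 0 with hψdef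
  set ψ' : ℝ → ℝ := fun t => φ' t - φ' (-t) with hψ'def
  have hψd : ∀ t ∈ Set.Ioo (-δ) δ, HasDerivAt ψ (ψ' t) t := by
    intro t ht
    have htn : -t ∈ Set.Ioo (-δ) δ := ⟨by linarith [ht.2], by linarith [ht.1]⟩
    have hc : HasDerivAt (fun t : ℝ => φ (-t)) (φ' (-t) * (-1)) t :=
      (h1 (-t) htn).comp t (hasDerivAt_neg t)
    have := ((h1 t ht).add hc).sub_const (2 * φ 0)
    simpa [hψdef, hψ'def, mul_neg_one, sub_eq_add_neg] using this
  have hIccsub : Set.Icc 0 h ⊆ Set.Ioo (-δ) δ := fun t ht =>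
    ⟨by linarith [ht.1], by linarith [ht.2]⟩
  obtain ⟨c, hc, heq⟩ := exists_ratio_hasDerivAt_eq_ratio_slope
    (fun t => t^2) (fun t => 2*t) hh0
    ((continuous_pow 2).continuousOn)
    (fun t _ => by simpa using hasDerivAt_pow 2 t)
    ψ ψ'
    (fun t ht => ((hψd t (hIccsub ht)).continuousAt.continuousWithinAt))
    (fun t ht => hψd t (hIccsub (Set.mem_Icc_of_Ioo ht)))
  -- heq : (ψ h - ψ 0) * (2*c) = (h^2 - 0^2) * ψ' c
  have hψ0 : ψ 0 = 0 := by simp only [hψdef]; ring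
  have hc0 : 0 < c := hc.1
  have hkey : ψ h / h^2 = ψ' c / (2*c) := by
    rw [hψ0] at heq
    have hh2 : h^2 ≠ 0 := by positivity
    have h2c : (2:ℝ)*c ≠ 0 := by positivity
    field_simp
    nlinarith [heq]
  have hquot : (2 * φ 0 - φ h - φ (-h)) / h^2 = -(S c) := by
    have h1' : (2 * φ 0 - φ h - φ (-h)) = -(ψ h) := by simp only [hψdef]; ring
    rw [h1', neg_div, hkey, hSdef]
  rw [hquot]
  have hcT : dist (S c) L < ε := hsub ⟨hc0, lt_trans hc.2 hhu⟩
  calc dist (-S c) (-L) = dist (S c) L := dist_neg_neg _ _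
    _ < ε := hcT


lemma liminf_le_zero_of_nonpos {f : ℝ → ℝ} (hf : ∀ h > 0, f h ≤ 0) :
    liminf f (nhdsWithin 0 (Set.Ioi 0)) ≤ 0 := by
  rw [Filter.liminf_eq]
  apply Real.sSup_le _ le_rfl
  intro b hb
  simp only [Set.mem_setOf_eq] at hb
  have h2 : ∀ᶠ h in nhdsWithin (0:ℝ) (Set.Ioi 0), b ≤ 0 := by
    filter_upwards [hb, self_mem_nhdsWithin] with h h1 h2
    exact le_trans h1 (hf h h2)
  exact h2.exists.choose_spec

lemma liminf_of_eventually_zero {f : ℝ → ℝ}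
    (hf : ∀ᶠ h in nhdsWithin (0:ℝ) (Set.Ioi 0), f h = 0) :
    liminf f (nhdsWithin 0 (Set.Ioi 0)) = 0 := by
  rw [liminf_congr hf]
  exact liminf_const 0

example (f : ℝ → ℝ) (L : ℝ) (h : Tendsto f (nhdsWithin 0 (Set.Ioi 0)) (nhds L)) :
    liminf f (nhdsWithin 0 (Set.Ioi 0)) = L := h.liminf_eq



variable {E F : Type*} [NormedAddCommGroup E] [NormedSpace ℝ E]
  [NormedAddCommGroup F] [NormedSpace ℝ F]

/-- Directional derivative operator. -/
def Dv (v : E) (V : E → ℝ) : E → ℝ := fun q => fderiv ℝ V q v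

lemma diffAt_of_contDiffOn {Ω : Set E} (hΩ : IsOpen Ω) {V : E → F}
    (hV : ContDiffOn ℝ (⊤:ℕ∞) V Ω) {q : E} (hq : q ∈ Ω) : DifferentiableAt ℝ V q := by
  have h := (hV.contDiffAt (hΩ.mem_nhds hq))
  exact h.differentiableAt (by decide)

lemma contDiffOn_fderiv {Ω : Set E} (hΩ : IsOpen Ω) {V : E → F}
    (hV : ContDiffOn ℝ (⊤:ℕ∞) V Ω) : ContDiffOn ℝ (⊤:ℕ∞) (fderiv ℝ V) Ω :=
  hV.fderiv_of_isOpen hΩ (m := (⊤:ℕ∞)) (by decide)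

lemma contDiffOn_Dv {Ω : Set E} (hΩ : IsOpen Ω) {V : E → ℝ}
    (hV : ContDiffOn ℝ (⊤:ℕ∞) V Ω) (v : E) : ContDiffOn ℝ (⊤:ℕ∞) (Dv v V) Ω :=
  (contDiffOn_fderiv hΩ hV).clm_apply contDiffOn_const

lemma diffAt_Dv {Ω : Set E} (hΩ : IsOpen Ω) {V : E → ℝ}
    (hV : ContDiffOn ℝ (⊤:ℕ∞) V Ω) (v : E) {q : E} (hq : q ∈ Ω) :
    DifferentiableAt ℝ (Dv v V) q :=
  diffAt_of_contDiffOn hΩ (contDiffOn_Dv hΩ hV v) hq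

lemma fderiv_Dv_eq {Ω : Set E} (hΩ : IsOpen Ω) {V : E → ℝ}
    (hV : ContDiffOn ℝ (⊤:ℕ∞) V Ω) {q : E} (hq : q ∈ Ω) (z : E) :
    fderiv ℝ (Dv z V) q = (fderiv ℝ (fderiv ℝ V) q).flip z := by
  have hdF : DifferentiableAt ℝ (fderiv ℝ V) q :=
    diffAt_of_contDiffOn hΩ (contDiffOn_fderiv hΩ hV) hq
  have h2 := fderiv_clm_apply (c := fderiv ℝ V) (u := fun _ => z) hdF (differentiableAt_const z)
  rw [show Dv z V = fun y => fderiv ℝ V y z from rfl, h2]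
  ext w
  simp

lemma Dv_comm {Ω : Set E} (hΩ : IsOpen Ω) {V : E → ℝ}
    (hV : ContDiffOn ℝ (⊤:ℕ∞) V Ω) {q : E} (hq : q ∈ Ω) (v w : E) :
    fderiv ℝ (Dv v V) q w = fderiv ℝ (Dv w V) q v := by
  have key : ∀ z : E, fderiv ℝ (Dv z V) q = (fderiv ℝ (fderiv ℝ V) q).flip z :=
    fun z => fderiv_Dv_eq hΩ hV hq z
  have hVq : ContDiffAt ℝ 2 V q :=
    (hV.contDiffAt (hΩ.mem_nhds hq)).of_le
      (show (2:WithTop ℕ∞) ≤ ((⊤:ℕ∞):WithTop ℕ∞) by decide)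
  have hsym := hVq.isSymmSndFDerivAt (by simp)
  rw [key v, key w]
  simp only [ContinuousLinearMap.flip_apply]
  exact hsym w v

abbrev Om (n : ℕ) : Set (Hn n) := {q : Hn n | 0 < q.2}

lemma isOpen_Om (n : ℕ) : IsOpen (Om n) := isOpen_lt continuous_const continuous_snd

def eiv (n : ℕ) (i : Fin n) : Hn n := (EuclideanSpace.single i 1, (0:ℝ))

def eyv (n : ℕ) : Hn n := ((0:En n), (1:ℝ))

lemma lapH_eq_Dv (n : ℕ) (V : Hn n → ℝ) (p : Hn n) :
    lapH n V p = (∑ i, Dv (eiv n i) (Dv (eiv n i) V) p) + Dv (eyv n) (Dv (eyv n) V) p := rfl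

lemma pdY_eq_Dv (n : ℕ) (V : Hn n → ℝ) (p : Hn n) : pdY n V p = Dv (eyv n) V p := rfl

lemma pdE_eq_Dv (n : ℕ) (e : En n) (V : Hn n → ℝ) (p : Hn n) :
    pdE n e V p = Dv (e, (0:ℝ)) V p := rfl

lemma norm_eiv (n : ℕ) (i : Fin n) : ‖eiv n i‖ = 1 := by
  simp [eiv, Prod.norm_def, EuclideanSpace.norm_single]

lemma norm_eyv (n : ℕ) : ‖eyv n‖ = 1 := by
  simp [eyv, Prod.norm_def]

lemma Dv_mul {E : Type*} [NormedAddCommGroup E] [NormedSpace ℝ E] {F G : E → ℝ} {q : E}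
    (hF : DifferentiableAt ℝ F q) (hG : DifferentiableAt ℝ G q) (v : E) :
    Dv v (fun r => F r * G r) q = F q * Dv v G q + G q * Dv v F q := by
  simp only [Dv]
  rw [fderiv_fun_mul hF hG]
  simp

lemma Dv_Dv_mul {E : Type*} [NormedAddCommGroup E] [NormedSpace ℝ E] {Ω : Set E} (hΩ : IsOpen Ω) {F G : E → ℝ}
    (hF : ContDiffOn ℝ (⊤:ℕ∞) F Ω) (hG : ContDiffOn ℝ (⊤:ℕ∞) G Ω)
    {q : E} (hq : q ∈ Ω) (v w : E) :
    Dv w (Dv v (fun r => F r * G r)) q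
      = F q * Dv w (Dv v G) q + G q * Dv w (Dv v F) q
        + (Dv w F q * Dv v G q + Dv w G q * Dv v F q) := by
  have heq : Dv v (fun r => F r * G r) =ᶠ[nhds q]
      (fun r => F r * Dv v G r + G r * Dv v F r) := by
    filter_upwards [hΩ.mem_nhds hq] with r hr
    exact Dv_mul (diffAt_of_contDiffOn hΩ hF hr) (diffAt_of_contDiffOn hΩ hG hr) v
  have h1 : Dv w (Dv v (fun r => F r * G r)) q
      = Dv w (fun r => F r * Dv v G r + G r * Dv v F r) q := by
    show fderiv ℝ _ q w = fderiv ℝ _ q w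
    rw [heq.fderiv_eq]
  rw [h1]
  have hdF := diffAt_of_contDiffOn hΩ hF hq
  have hdG := diffAt_of_contDiffOn hΩ hG hq
  have hdDF := diffAt_Dv hΩ hF v hq
  have hdDG := diffAt_Dv hΩ hG v hq
  have e1 : Dv w (fun r => F r * Dv v G r + G r * Dv v F r) q
      = Dv w (fun r => F r * Dv v G r) q + Dv w (fun r => G r * Dv v F r) q := by
    show fderiv ℝ _ q w = fderiv ℝ _ q w + fderiv ℝ _ q w
    rw [fderiv_fun_add (f := fun r => F r * Dv v G r) (g := fun r => G r * Dv v F r)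
      (hdF.mul hdDG) (hdG.mul hdDF)]
    simp
  rw [e1, Dv_mul hdF hdDG, Dv_mul hdG hdDF]
  ring

lemma lapH_mul {n : ℕ} {Ω : Set (Hn n)} (hΩ : IsOpen Ω) {F G : Hn n → ℝ}
    (hF : ContDiffOn ℝ (⊤:ℕ∞) F Ω) (hG : ContDiffOn ℝ (⊤:ℕ∞) G Ω)
    {q : Hn n} (hq : q ∈ Ω) :
    lapH n (fun r => F r * G r) q = F q * lapH n G q + G q * lapH n F q
      + 2*((∑ i, Dv (eiv n i) F q * Dv (eiv n i) G q)
            + Dv (eyv n) F q * Dv (eyv n) G q) := by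
  rw [lapH_eq_Dv, lapH_eq_Dv, lapH_eq_Dv]
  have h1 : ∀ i ∈ Finset.univ, Dv (eiv n i) (Dv (eiv n i) (fun r => F r * G r)) q
      = F q * Dv (eiv n i) (Dv (eiv n i) G) q + G q * Dv (eiv n i) (Dv (eiv n i) F) q
        + 2 * (Dv (eiv n i) F q * Dv (eiv n i) G q) := by
    intro i _
    rw [Dv_Dv_mul hΩ hF hG hq (eiv n i) (eiv n i)]
    ring
  rw [Finset.sum_congr rfl h1, Dv_Dv_mul hΩ hF hG hq (eyv n) (eyv n)]
  simp only [Finset.sum_add_distrib, ← Finset.mul_sum]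
  ring

lemma pdY_mul {n : ℕ} {F G : Hn n → ℝ} {q : Hn n}
    (hF : DifferentiableAt ℝ F q) (hG : DifferentiableAt ℝ G q) :
    pdY n (fun r => F r * G r) q = F q * pdY n G q + G q * pdY n F q := by
  rw [pdY_eq_Dv, pdY_eq_Dv, pdY_eq_Dv]
  exact Dv_mul hF hG (eyv n)

lemma La_mul {n : ℕ} (a : ℝ) {Ω : Set (Hn n)} (hΩ : IsOpen Ω) {F G : Hn n → ℝ}
    (hF : ContDiffOn ℝ (⊤:ℕ∞) F Ω) (hG : ContDiffOn ℝ (⊤:ℕ∞) G Ω)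
    {q : Hn n} (hq : q ∈ Ω) :
    La n a (fun r => F r * G r) q = F q * La n a G q + G q * La n a F q
      - q.2^a * (2*((∑ i, Dv (eiv n i) F q * Dv (eiv n i) G q)
            + Dv (eyv n) F q * Dv (eyv n) G q)) := by
  simp only [La]
  rw [lapH_mul hΩ hF hG hq,
    pdY_mul (diffAt_of_contDiffOn hΩ hF hq) (diffAt_of_contDiffOn hΩ hG hq)]
  ring

/-- Chain rule for `x`-only functions on the half-space. -/
lemma Dv_comp_fst {n : ℕ} {ζ : En n → ℝ} (hζ : Differentiable ℝ ζ)
    (q : Hn n) (v : En n) (t : ℝ) :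
    Dv (v, t) (fun r : Hn n => ζ r.1) q = fderiv ℝ ζ q.1 v := by
  have h : HasFDerivAt (fun r : Hn n => ζ r.1)
      ((fderiv ℝ ζ q.1).comp (ContinuousLinearMap.fst ℝ (En n) ℝ)) q :=
    (hζ q.1).hasFDerivAt.comp q (hasFDerivAt_fst)
  show fderiv ℝ _ q (v, t) = _
  rw [h.fderiv]
  rfl

/-- Chain rule for scaling. -/
lemma Dv_comp_smul {n : ℕ} {ζ : En n → ℝ} (hζ : Differentiable ℝ ζ)
    (c : ℝ) (x v : En n) :
    Dv v (fun y => ζ (c • y)) x = fderiv ℝ ζ (c • x) (c • v) := by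
  have hB : HasFDerivAt (fun y : En n => c • y)
      (c • ContinuousLinearMap.id ℝ (En n)) x := by
    exact (ContinuousLinearMap.id ℝ (En n)).hasFDerivAt.const_smul c
  have h : HasFDerivAt (fun y => ζ (c • y))
      ((fderiv ℝ ζ (c • x)).comp (c • ContinuousLinearMap.id ℝ (En n))) x :=
    (hζ (c • x)).hasFDerivAt.comp x hB
  show fderiv ℝ _ x v = _
  rw [h.fderiv]
  simp

lemma Dv_swap3 {E : Type*} [NormedAddCommGroup E] [NormedSpace ℝ E]
    {Ω : Set E} (hΩ : IsOpen Ω) {V : E → ℝ}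
    (hV : ContDiffOn ℝ (⊤:ℕ∞) V Ω) {q : E} (hq : q ∈ Ω) (v w : E) :
    Dv v (Dv w (Dv w V)) q = Dv w (Dv w (Dv v V)) q := by
  have h1 : Dv v (Dv w (Dv w V)) q = Dv w (Dv v (Dv w V)) q :=
    (Dv_comm hΩ (contDiffOn_Dv hΩ hV w) hq v w).symm
  have h2 : Dv v (Dv w V) =ᶠ[nhds q] Dv w (Dv v V) := by
    filter_upwards [hΩ.mem_nhds hq] with r hr
    exact Dv_comm hΩ hV hr w v
  have h3 : Dv w (Dv v (Dv w V)) q = Dv w (Dv w (Dv v V)) q := by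
    show fderiv ℝ _ q w = fderiv ℝ _ q w
    rw [h2.fderiv_eq]
  rw [h1, h3]

lemma La_Dv_eq_zero {n : ℕ} {a : ℝ} {U : Hn n → ℝ}
    (hU : ContDiffOn ℝ (⊤:ℕ∞) U (Om n))
    (hLa : ∀ q ∈ Om n, La n a U q = 0) (v : En n) :
    ∀ q ∈ Om n, La n a (Dv (v, (0:ℝ)) U) q = 0 := by
  intro q hq
  have hΩ : IsOpen (Om n) := isOpen_Om n
  have hy : 0 < q.2 := hq
  set Φ : Hn n → ℝ := fun r => lapH n U r + (a * r.2⁻¹) * Dv (eyv n) U r with hΦdef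
  have hΦ0 : ∀ r ∈ Om n, Φ r = 0 := by
    intro r hr
    have hyr : (0:ℝ) < r.2 := hr
    have h0 := hLa r hr
    simp only [La, neg_eq_zero] at h0
    have hpow : r.2 ^ (a-1) = r.2^a * r.2⁻¹ := by
      rw [Real.rpow_sub_one (ne_of_gt hyr)]
      ring
    rw [hpow] at h0
    have hra : (0:ℝ) < r.2 ^ a := Real.rpow_pos_of_pos hyr a
    have : r.2^a * Φ r = 0 := by
      rw [hΦdef]
      simp only [pdY_eq_Dv] at h0
      nlinarith [h0]
    rcases mul_eq_zero.1 this with h | h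
    · exact absurd h (ne_of_gt hra)
    · exact h
  -- derivative of Φ in direction (v,0) vanishes
  have hDΦ : Dv (v, (0:ℝ)) Φ q = 0 := by
    have hΦe : Φ =ᶠ[nhds q] (fun _ => 0) := by
      filter_upwards [hΩ.mem_nhds hq] with r hr
      exact hΦ0 r hr
    show fderiv ℝ Φ q (v, (0:ℝ)) = 0
    rw [hΦe.fderiv_eq, fderiv_fun_const]
    simp
  -- differentiability of the coefficient
  have hcdiff : DifferentiableAt ℝ (fun r : Hn n => a * r.2⁻¹) q :=
    ((differentiableAt_snd.inv (ne_of_gt hy)).const_mul a)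
  have hDc : Dv (v, (0:ℝ)) (fun r : Hn n => a * r.2⁻¹) q = 0 := by
    have hinv : HasDerivAt Inv.inv (-(q.2^2)⁻¹) q.2 := hasDerivAt_inv (ne_of_gt hy)
    have hsnd : HasFDerivAt (fun r : Hn n => r.2) (ContinuousLinearMap.snd ℝ (En n) ℝ) q :=
      hasFDerivAt_snd
    have h := hinv.comp_hasFDerivAt q hsnd
    have h2 := h.const_mul a
    have h3 : HasFDerivAt (fun r : Hn n => a * r.2⁻¹)
        (a • (-(q.2 ^ 2)⁻¹ • ContinuousLinearMap.snd ℝ (En n) ℝ)) q := h2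
    show fderiv ℝ _ q (v, (0:ℝ)) = 0
    rw [h3.fderiv]
    simp
  -- differentiability of pieces of Φ
  have hlapdiff : DifferentiableAt ℝ (fun r => lapH n U r) q := by
    have : (fun r => lapH n U r)
        = fun r => (∑ i, Dv (eiv n i) (Dv (eiv n i) U) r) + Dv (eyv n) (Dv (eyv n) U) r :=
      funext fun r => lapH_eq_Dv n U r
    rw [this]
    exact (DifferentiableAt.fun_sum fun i _ =>
        diffAt_Dv hΩ (contDiffOn_Dv hΩ hU _) _ hq).add
      (diffAt_Dv hΩ (contDiffOn_Dv hΩ hU _) _ hq)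
  have hDyU := diffAt_Dv hΩ hU (eyv n) hq
  -- expand the derivative of Φ
  have hexp : Dv (v, (0:ℝ)) Φ q
      = lapH n (Dv (v, (0:ℝ)) U) q + (a * q.2⁻¹) * pdY n (Dv (v, (0:ℝ)) U) q := by
    have hsplit : Dv (v, (0:ℝ)) Φ q
        = Dv (v, (0:ℝ)) (fun r => lapH n U r) q
          + Dv (v, (0:ℝ)) (fun r => (a * r.2⁻¹) * Dv (eyv n) U r) q := by
      show fderiv ℝ _ q _ = fderiv ℝ _ q _ + fderiv ℝ _ q _
      rw [hΦdef, fderiv_fun_add (g := fun r => (a * r.2⁻¹) * Dv (eyv n) U r) hlapdiff (hcdiff.mul hDyU)]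
      simp
    rw [hsplit]
    -- first piece
    have hpiece1 : Dv (v, (0:ℝ)) (fun r => lapH n U r) q = lapH n (Dv (v, (0:ℝ)) U) q := by
      have hfun : (fun r => lapH n U r)
          = fun r => (∑ i, Dv (eiv n i) (Dv (eiv n i) U) r) + Dv (eyv n) (Dv (eyv n) U) r :=
        funext fun r => lapH_eq_Dv n U r
      rw [hfun]
      have hsum : Dv (v, (0:ℝ))
          (fun r => (∑ i, Dv (eiv n i) (Dv (eiv n i) U) r) + Dv (eyv n) (Dv (eyv n) U) r) q
          = (∑ i, Dv (v, (0:ℝ)) (Dv (eiv n i) (Dv (eiv n i) U)) q)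
            + Dv (v, (0:ℝ)) (Dv (eyv n) (Dv (eyv n) U)) q := by
        show fderiv ℝ _ q _ = _
        rw [fderiv_fun_add (DifferentiableAt.fun_sum fun i _ =>
            diffAt_Dv hΩ (contDiffOn_Dv hΩ hU _) _ hq)
          (diffAt_Dv hΩ (contDiffOn_Dv hΩ hU _) _ hq)]
        rw [fderiv_fun_sum (fun i _ => diffAt_Dv hΩ (contDiffOn_Dv hΩ hU _) _ hq)]
        simp [Dv]
      rw [hsum, lapH_eq_Dv]
      congr 1
      · exact Finset.sum_congr rfl fun i _ => Dv_swap3 hΩ hU hq _ _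
      · exact Dv_swap3 hΩ hU hq _ _
    -- second piece
    have hpiece2 : Dv (v, (0:ℝ)) (fun r => (a * r.2⁻¹) * Dv (eyv n) U r) q
        = (a * q.2⁻¹) * pdY n (Dv (v, (0:ℝ)) U) q := by
      rw [Dv_mul hcdiff hDyU, hDc, mul_zero, add_zero, pdY_eq_Dv]
      congr 1
      exact Dv_comm hΩ hU hq _ _
    rw [hpiece1, hpiece2]
  -- conclude
  have hzero : lapH n (Dv (v, (0:ℝ)) U) q + (a * q.2⁻¹) * pdY n (Dv (v, (0:ℝ)) U) q = 0 := by
    rw [← hexp]; exact hDΦ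
  simp only [La]
  have hpow : q.2 ^ (a-1) = q.2^a * q.2⁻¹ := by
    rw [Real.rpow_sub_one (ne_of_gt hy)]; ring
  rw [hpow]
  linear_combination (-q.2^a) * hzero

lemma quot_tendsto {n : ℕ} {Ω : Set (Hn n)} (hΩ : IsOpen Ω) {V : Hn n → ℝ}
    (hV : ContDiffOn ℝ (⊤:ℕ∞) V Ω) {p : Hn n} (hp : p ∈ Ω) {v : Hn n} (hv : ‖v‖ = 1) :
    Tendsto (fun h : ℝ => (2 * V p - V (p + h • v) - V (p - h • v)) / h^2)
      (nhdsWithin 0 (Set.Ioi 0)) (nhds (-(Dv v (Dv v V) p))) := by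
  obtain ⟨δ, hδ, hball⟩ := Metric.isOpen_iff.1 hΩ p hp
  have hline : ∀ t : ℝ, HasDerivAt (fun t : ℝ => p + t • v) v t := by
    intro t
    have h1 : HasDerivAt (fun t : ℝ => t • v) ((1:ℝ) • v) t :=
      (hasDerivAt_id t).smul_const v
    simpa using h1.const_add p
  have hmem : ∀ t : ℝ, |t| < δ → p + t • v ∈ Ω := by
    intro t ht
    apply hball
    simp only [Metric.mem_ball, dist_eq_norm]
    calc ‖p + t • v - p‖ = ‖t • v‖ := by congr 1; abel
      _ = |t| * ‖v‖ := by rw [norm_smul]; rfl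
      _ < δ := by rw [hv, mul_one]; exact ht
  have h1 : ∀ t ∈ Set.Ioo (-δ) δ, HasDerivAt (fun t => V (p + t • v))
      ((fun t => Dv v V (p + t • v)) t) t := by
    intro t ht
    have htm : p + t • v ∈ Ω := hmem t (abs_lt.2 ⟨ht.1, ht.2⟩)
    exact ((diffAt_of_contDiffOn hΩ hV htm).hasFDerivAt).comp_hasDerivAt t (hline t)
  have h2 : HasDerivAt (fun t : ℝ => Dv v V (p + t • v)) (Dv v (Dv v V) p) (0:ℝ) := by
    have hpm : p + (0:ℝ) • v ∈ Ω := by simpa using hp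
    have h := ((diffAt_of_contDiffOn hΩ (contDiffOn_Dv hΩ hV v) hpm).hasFDerivAt).comp_hasDerivAt
      (0:ℝ) (hline 0)
    rw [zero_smul, add_zero] at h
    exact h
  have := symmQuot_tendsto hδ h1 h2
  exact this.congr (fun h => by simp [neg_smul, sub_eq_add_neg])

lemma negLapIncH_eq {n : ℕ} {Ω : Set (Hn n)} (hΩ : IsOpen Ω) {V : Hn n → ℝ}
    (hV : ContDiffOn ℝ (⊤:ℕ∞) V Ω) {p : Hn n} (hp : p ∈ Ω) :
    negLapIncH n V p = - lapH n V p := by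
  have hterms := (tendsto_finset_sum (Finset.univ : Finset (Fin n))
      (fun i _ => quot_tendsto hΩ hV hp (norm_eiv n i))).add
    (quot_tendsto hΩ hV hp (norm_eyv n))
  have hval : negLapIncH n V p
      = (∑ i, -(Dv (eiv n i) (Dv (eiv n i) V) p)) + -(Dv (eyv n) (Dv (eyv n) V) p) :=
    hterms.liminf_eq
  rw [hval, lapH_eq_Dv]
  simp only [Finset.sum_neg_distrib]
  abel

lemma negLapIncH_congr {n : ℕ} {V W : Hn n → ℝ} {p : Hn n}
    (h : V =ᶠ[nhds p] W) : negLapIncH n V p = negLapIncH n W p := by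
  apply liminf_congr
  obtain ⟨ε, hε, hball⟩ := Metric.eventually_nhds_iff_ball.1 h
  have hmem : Set.Ioo (0:ℝ) ε ∈ nhdsWithin (0:ℝ) (Set.Ioi 0) := by
    rw [mem_nhdsGT_iff_exists_Ioo_subset]
    exact ⟨ε, hε, subset_rfl⟩
  filter_upwards [hmem] with t ht
  have hVp : V p = W p := hball p (Metric.mem_ball_self hε)
  have hpt : ∀ v : Hn n, ‖v‖ = 1 → V (p + t • v) = W (p + t • v) := by
    intro v hv
    apply hball
    simp only [Metric.mem_ball, dist_eq_norm]
    have : p + t • v - p = t • v := by abel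
    rw [this, norm_smul, hv, mul_one]
    calc ‖t‖ = |t| := rfl
      _ < ε := by rw [abs_of_pos ht.1]; exact ht.2
  have hpt' : ∀ v : Hn n, ‖v‖ = 1 → V (p - t • v) = W (p - t • v) := by
    intro v hv
    apply hball
    simp only [Metric.mem_ball, dist_eq_norm]
    have : p - t • v - p = -(t • v) := by abel
    rw [this, norm_neg, norm_smul, hv, mul_one]
    calc ‖t‖ = |t| := rfl
      _ < ε := by rw [abs_of_pos ht.1]; exact ht.2
  congr 1
  · apply Finset.sum_congr rfl
    intro i _
    rw [hVp,
      hpt ((EuclideanSpace.single i 1 : En n), (0:ℝ)) (norm_eiv n i),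
      hpt' ((EuclideanSpace.single i 1 : En n), (0:ℝ)) (norm_eiv n i)]
  · rw [hVp, hpt ((0 : En n), (1:ℝ)) (norm_eyv n), hpt' ((0 : En n), (1:ℝ)) (norm_eyv n)]

lemma negLapIncH_zero_fun (n : ℕ) (p : Hn n) : negLapIncH n (fun _ => (0:ℝ)) p = 0 := by
  have : negLapIncH n (fun _ => (0:ℝ)) p = liminf (fun _ : ℝ => (0:ℝ))
      (nhdsWithin (0:ℝ) (Set.Ioi 0)) := by
    apply liminf_congr
    filter_upwards with t
    simp
  rw [this, liminf_const]

lemma final_ineq (n : ℕ) {M Ri gp et gy : ℝ} (Bi bb cc : Fin n → ℝ)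
    (hM : 0 ≤ M) (hRi : 0 ≤ Ri)
    (hbb : ∀ i, |bb i| ≤ M * Ri) (hcc : ∀ i, |cc i| ≤ M * Ri^2) (het : |et| ≤ M) :
    -((8*n*M^2+1) * Ri^2 * gp^2)
      ≤ 2*et^2*((∑ i, (Bi i)^2) + gy^2) + gp^2*(∑ i, (2*(bb i)^2 + 2*(et*cc i)))
        + 8*gp*(∑ i, et*bb i*Bi i) := by
  have hkey : ∀ i ∈ Finset.univ, -(8*M^2*Ri^2*gp^2)
      ≤ 2*et^2*(Bi i)^2 + (2*(bb i)^2 + 2*(et*cc i))*gp^2 + 8*gp*(et*bb i*Bi i) := by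
    intro i _
    have h1 : (bb i)^2 ≤ M^2*Ri^2 := by
      have := hbb i
      nlinarith [abs_nonneg (bb i), sq_abs (bb i)]
    have h2 : |et * cc i| ≤ M^2 * Ri^2 := by
      rw [abs_mul]
      calc |et| * |cc i| ≤ M * (M * Ri^2) :=
            mul_le_mul het (hcc i) (abs_nonneg _) hM
        _ = M^2 * Ri^2 := by ring
    have h3 : -(M^2*Ri^2) ≤ et * cc i := neg_le_of_abs_le h2
    nlinarith [sq_nonneg (et * Bi i + 2 * gp * bb i), sq_nonneg gp, h1, h3]
  have hsum := Finset.sum_le_sum hkey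
  rw [Finset.sum_const, Finset.card_univ, Fintype.card_fin] at hsum
  have hdist : 2*et^2*((∑ i, (Bi i)^2) + gy^2) + gp^2*(∑ i, (2*(bb i)^2 + 2*(et*cc i)))
        + 8*gp*(∑ i, et*bb i*Bi i)
      = (∑ i, (2*et^2*(Bi i)^2 + (2*(bb i)^2 + 2*(et*cc i))*gp^2 + 8*gp*(et*bb i*Bi i)))
        + 2*et^2*gy^2 := by
    simp only [Finset.sum_add_distrib, ← Finset.sum_mul, ← Finset.mul_sum]
    ring
  rw [hdist]
  have hn : (0:ℝ) ≤ (n:ℝ) := Nat.cast_nonneg n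
  have hsmul : (n : ℝ) * -(8*M^2*Ri^2*gp^2) ≤ ∑ i, (2*et^2*(Bi i)^2
      + (2*(bb i)^2 + 2*(et*cc i))*gp^2 + 8*gp*(et*bb i*Bi i)) := by
    calc (n:ℝ) * -(8*M^2*Ri^2*gp^2) = n • -(8*M^2*Ri^2*gp^2) := by
          rw [nsmul_eq_mul]
      _ ≤ _ := hsum
  nlinarith [sq_nonneg (et*gy), sq_nonneg gp, sq_nonneg Ri, mul_nonneg (mul_nonneg (sq_nonneg Ri) (sq_nonneg gp)) hn]

set_option maxHeartbeats 1000000 in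
lemma main_estimate (n : ℕ) {a : ℝ} {U : Hn n → ℝ}
    (hUsm : ContDiffOn ℝ (⊤:ℕ∞) U (Om n))
    (hUeq : ∀ q ∈ Om n, La n a U q = 0)
    {ηb : En n → ℝ} (hηb : ContDiff ℝ (⊤:ℕ∞) ηb)
    (hηbsupp : tsupport ηb ⊆ ball (0 : En n) (1/2))
    {M : ℝ} (hM : C2BddBy n ηb M) {R : ℝ} (hR : 0 < R) (e : En n)
    {p : Hn n} (hp : 0 < p.2) :
    LaInc n a (fun q => (ηb (R⁻¹ • q.1))^2 * (max (pdE n e (pdE n e U) q) 0)^2) p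
      ≤ (8*n*M^2+1) * (Set.indicator (ball (0 : En n) (R/2)) (fun _ => (1:ℝ)) p.1)
          * R⁻¹^2 * p.2 ^ a * (pdE n e (pdE n e U) p)^2 := by
  have hΩ : IsOpen (Om n) := isOpen_Om n
  have hpΩ : p ∈ Om n := hp
  set g : Hn n → ℝ := pdE n e (pdE n e U) with hgdef
  have hgsm : ContDiffOn ℝ (⊤:ℕ∞) g (Om n) :=
    contDiffOn_Dv hΩ (contDiffOn_Dv hΩ hUsm (e,(0:ℝ))) (e,(0:ℝ))
  have hLag : ∀ q ∈ Om n, La n a g q = 0 :=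
    La_Dv_eq_zero (contDiffOn_Dv hΩ hUsm (e,(0:ℝ))) (La_Dv_eq_zero hUsm hUeq e) e
  have hM0 : 0 ≤ M := le_trans (abs_nonneg _) (hM 0).1
  have hya : 0 < p.2 ^ a := Real.rpow_pos_of_pos hp a
  have hRinv : (0:ℝ) < R⁻¹ := inv_pos.2 hR
  set Vf : Hn n → ℝ := fun q => (ηb (R⁻¹ • q.1))^2 * (max (g q) 0)^2 with hVfdef
  have hLaIncVf : LaInc n a Vf p
      = p.2^a * negLapIncH n Vf p - a * p.2^(a-1) * pdY n Vf p := rfl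
  have hVfnonneg : ∀ q, 0 ≤ Vf q := fun q => mul_nonneg (sq_nonneg _) (sq_nonneg _)
  by_cases hloc : p.1 ∈ ball (0 : En n) (R/2)
  · -- indicator is 1
    rw [Set.indicator_of_mem hloc]
    by_cases hgp : g p ≤ 0
    · -- subcase g p ≤ 0
      have hVfp : Vf p = 0 := by
        simp [hVfdef, max_eq_right hgp]
      have hneg : negLapIncH n Vf p ≤ 0 := by
        apply liminf_le_zero_of_nonpos
        intro h hh
        have hterm : ∀ v : Hn n, (2 * Vf p - Vf (p + h • v) - Vf (p - h • v)) / h^2 ≤ 0 := by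
          intro v
          apply div_nonpos_of_nonpos_of_nonneg
          · have h1 := hVfnonneg (p + h • v)
            have h2 := hVfnonneg (p - h • v)
            rw [hVfp]
            linarith
          · positivity
        have h1 : (∑ i : Fin n, (2 * Vf p - Vf (p + h • ((EuclideanSpace.single i 1 : En n), (0:ℝ)))
            - Vf (p - h • ((EuclideanSpace.single i 1 : En n), (0:ℝ)))) / h^2) ≤ 0 :=
          Finset.sum_nonpos fun i _ => hterm _
        have h2 := hterm ((0 : En n), (1:ℝ))
        linarith
      have hgd : DifferentiableAt ℝ g p :=
        diffAt_Dv hΩ (contDiffOn_Dv hΩ hUsm (e,(0:ℝ))) (e,(0:ℝ)) hpΩ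
      have hpdY : pdY n Vf p = 0 := by
        have hmax : HasFDerivAt (fun q => (max (g q) 0)^2)
            ((2 * max (g p) 0) • fderiv ℝ g p) p :=
          (hasDerivAt_maxsq (g p)).comp_hasFDerivAt p hgd.hasFDerivAt
        have hfηd : DifferentiableAt ℝ (fun q : Hn n => (ηb (R⁻¹ • q.1))^2) p := by
          have hc : ContDiff ℝ (⊤:ℕ∞) (fun q : Hn n => (ηb (R⁻¹ • q.1))^2) :=
            (hηb.comp ((contDiff_fst).const_smul R⁻¹)).pow 2
          exact hc.differentiable (by decide) p
        have hV : HasFDerivAt Vf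
            ((fun q : Hn n => (ηb (R⁻¹ • q.1))^2) p • ((2 * max (g p) 0) • fderiv ℝ g p)
              + (max (g p) 0)^2 • fderiv ℝ (fun q : Hn n => (ηb (R⁻¹ • q.1))^2) p) p :=
          hfηd.hasFDerivAt.mul hmax
        show fderiv ℝ Vf p _ = 0
        rw [hV.fderiv, max_eq_right hgp]
        simp
      rw [hLaIncVf, hpdY]
      have hRHS : 0 ≤ (8*↑n*M^2+1) * 1 * R⁻¹^2 * p.2^a * (g p)^2 := by positivity
      nlinarith [hya, hneg, hRHS]
    · -- subcase g p > 0
      push_neg at hgp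
      have hgd : DifferentiableAt ℝ g p := diffAt_of_contDiffOn hΩ hgsm hpΩ
      have hηbd : Differentiable ℝ ηb := hηb.differentiable (by decide)
      have hηRC : ContDiff ℝ (⊤:ℕ∞) (fun x : En n => ηb (R⁻¹ • x)) :=
        hηb.comp (contDiff_id.const_smul R⁻¹)
      have hηRd : Differentiable ℝ (fun x : En n => ηb (R⁻¹ • x)) :=
        hηRC.differentiable (by decide)
      have hζC : ContDiff ℝ (⊤:ℕ∞) (fun x : En n => ηb (R⁻¹ • x) * ηb (R⁻¹ • x)) :=
        hηRC.mul hηRC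
      have hζd : Differentiable ℝ (fun x : En n => ηb (R⁻¹ • x) * ηb (R⁻¹ • x)) :=
        hζC.differentiable (by decide)
      have hfηC : ContDiff ℝ (⊤:ℕ∞) (fun q : Hn n => (ηb (R⁻¹ • q.1))^2) :=
        (hηb.comp ((contDiff_fst).const_smul R⁻¹)).pow 2
      have hfηζ : (fun q : Hn n => (ηb (R⁻¹ • q.1))^2)
          = fun q : Hn n => (fun x : En n => ηb (R⁻¹ • x) * ηb (R⁻¹ • x)) q.1 := by
        funext q
        simp [pow_two]
      have hWsm : ContDiffOn ℝ (⊤:ℕ∞)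
          (fun q : Hn n => (ηb (R⁻¹ • q.1))^2 * (g q * g q)) (Om n) :=
        hfηC.contDiffOn.mul (hgsm.mul hgsm)
      -- V equals W near p
      have hN2 : IsOpen (Om n ∩ g⁻¹' (Set.Ioi 0)) :=
        hgsm.continuousOn.isOpen_inter_preimage hΩ isOpen_Ioi
      have hpN2 : p ∈ Om n ∩ g⁻¹' (Set.Ioi 0) := ⟨hpΩ, hgp⟩
      have hVfW : Vf =ᶠ[nhds p] (fun q : Hn n => (ηb (R⁻¹ • q.1))^2 * (g q * g q)) := by
        filter_upwards [hN2.mem_nhds hpN2] with q hq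
        have hmax : max (g q) 0 = g q := max_eq_left (le_of_lt hq.2)
        simp [hVfdef, hmax, pow_two]
      -- LaInc Vf = La W
      have hLaIncW : LaInc n a Vf p
          = La n a (fun q : Hn n => (ηb (R⁻¹ • q.1))^2 * (g q * g q)) p := by
        rw [hLaIncVf, negLapIncH_congr hVfW, negLapIncH_eq hΩ hWsm hpΩ]
        have h2 : pdY n Vf p
            = pdY n (fun q : Hn n => (ηb (R⁻¹ • q.1))^2 * (g q * g q)) p := by
          show fderiv ℝ Vf p _ = fderiv ℝ _ p _
          rw [hVfW.fderiv_eq]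
        rw [h2]
        simp only [La]
        ring
      rw [hLaIncW]
      -- first derivatives of the scaled cutoff (En-level)
      have hbbeq : ∀ (y : En n) (v : En n),
          Dv v (fun x : En n => ηb (R⁻¹ • x)) y = fderiv ℝ ηb (R⁻¹ • y) (R⁻¹ • v) :=
        fun y v => Dv_comp_smul hηbd R⁻¹ y v
      have hKd : ∀ v : En n, Differentiable ℝ (Dv v ηb) :=
        fun v y => diffAt_Dv isOpen_univ hηb.contDiffOn v (Set.mem_univ y)
      have hDDηR : ∀ v : En n, Dv v (Dv v (fun x : En n => ηb (R⁻¹ • x))) p.1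
          = fderiv ℝ (fderiv ℝ ηb) (R⁻¹ • p.1) (R⁻¹ • v) (R⁻¹ • v) := by
        intro v
        have hfun : Dv v (fun x : En n => ηb (R⁻¹ • x))
            = fun y : En n => (Dv (R⁻¹ • v) ηb) (R⁻¹ • y) :=
          funext fun y => hbbeq y v
        rw [hfun]
        have h2 := Dv_comp_smul (ζ := Dv (R⁻¹ • v) ηb) (hKd (R⁻¹ • v)) R⁻¹ p.1 v
        rw [h2, fderiv_Dv_eq isOpen_univ hηb.contDiffOn (Set.mem_univ (R⁻¹ • p.1)) (R⁻¹ • v)]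
        simp [ContinuousLinearMap.flip_apply]
      -- ζ-level derivatives at p.1
      have hζ1 : ∀ i : Fin n,
          Dv (EuclideanSpace.single i 1) (fun x : En n => ηb (R⁻¹ • x) * ηb (R⁻¹ • x)) p.1
          = ηb (R⁻¹ • p.1) * fderiv ℝ ηb (R⁻¹ • p.1) (R⁻¹ • EuclideanSpace.single i 1)
            + ηb (R⁻¹ • p.1) * fderiv ℝ ηb (R⁻¹ • p.1) (R⁻¹ • EuclideanSpace.single i 1) := by
        intro i
        have h1 : Dv (EuclideanSpace.single i 1)
              (fun x : En n => ηb (R⁻¹ • x) * ηb (R⁻¹ • x)) p.1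
            = ηb (R⁻¹ • p.1) * Dv (EuclideanSpace.single i 1) (fun x : En n => ηb (R⁻¹ • x)) p.1
              + ηb (R⁻¹ • p.1) * Dv (EuclideanSpace.single i 1) (fun x : En n => ηb (R⁻¹ • x)) p.1 :=
          Dv_mul (hηRd p.1) (hηRd p.1) (EuclideanSpace.single i 1)
        rw [h1, hbbeq p.1 (EuclideanSpace.single i 1)]
      have hζ2 : ∀ i : Fin n,
          Dv (EuclideanSpace.single i 1) (Dv (EuclideanSpace.single i 1)
            (fun x : En n => ηb (R⁻¹ • x) * ηb (R⁻¹ • x))) p.1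
          = ηb (R⁻¹ • p.1) * fderiv ℝ (fderiv ℝ ηb) (R⁻¹ • p.1)
              (R⁻¹ • EuclideanSpace.single i 1) (R⁻¹ • EuclideanSpace.single i 1)
            + ηb (R⁻¹ • p.1) * fderiv ℝ (fderiv ℝ ηb) (R⁻¹ • p.1)
              (R⁻¹ • EuclideanSpace.single i 1) (R⁻¹ • EuclideanSpace.single i 1)
            + (fderiv ℝ ηb (R⁻¹ • p.1) (R⁻¹ • EuclideanSpace.single i 1)
                * fderiv ℝ ηb (R⁻¹ • p.1) (R⁻¹ • EuclideanSpace.single i 1)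
              + fderiv ℝ ηb (R⁻¹ • p.1) (R⁻¹ • EuclideanSpace.single i 1)
                * fderiv ℝ ηb (R⁻¹ • p.1) (R⁻¹ • EuclideanSpace.single i 1)) := by
        intro i
        have h1 : Dv (EuclideanSpace.single i 1) (Dv (EuclideanSpace.single i 1)
              (fun x : En n => ηb (R⁻¹ • x) * ηb (R⁻¹ • x))) p.1
            = ηb (R⁻¹ • p.1) * Dv (EuclideanSpace.single i 1) (Dv (EuclideanSpace.single i 1)
                  (fun x : En n => ηb (R⁻¹ • x))) p.1
              + ηb (R⁻¹ • p.1) * Dv (EuclideanSpace.single i 1) (Dv (EuclideanSpace.single i 1)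
                  (fun x : En n => ηb (R⁻¹ • x))) p.1
              + (Dv (EuclideanSpace.single i 1) (fun x : En n => ηb (R⁻¹ • x)) p.1
                  * Dv (EuclideanSpace.single i 1) (fun x : En n => ηb (R⁻¹ • x)) p.1
                + Dv (EuclideanSpace.single i 1) (fun x : En n => ηb (R⁻¹ • x)) p.1
                  * Dv (EuclideanSpace.single i 1) (fun x : En n => ηb (R⁻¹ • x)) p.1) :=
          Dv_Dv_mul isOpen_univ hηRC.contDiffOn hηRC.contDiffOn (Set.mem_univ p.1)
            (EuclideanSpace.single i 1) (EuclideanSpace.single i 1)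
        rw [h1, hDDηR (EuclideanSpace.single i 1), hbbeq p.1 (EuclideanSpace.single i 1)]
      -- fη-level derivatives at p
      have hDfη : ∀ i : Fin n, Dv (eiv n i) (fun q : Hn n => (ηb (R⁻¹ • q.1))^2) p
          = ηb (R⁻¹ • p.1) * fderiv ℝ ηb (R⁻¹ • p.1) (R⁻¹ • EuclideanSpace.single i 1)
            + ηb (R⁻¹ • p.1) * fderiv ℝ ηb (R⁻¹ • p.1) (R⁻¹ • EuclideanSpace.single i 1) := by
        intro i
        have h0 : Dv (eiv n i) (fun q : Hn n => (ηb (R⁻¹ • q.1))^2) p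
            = Dv (EuclideanSpace.single i 1)
                (fun x : En n => ηb (R⁻¹ • x) * ηb (R⁻¹ • x)) p.1 := by
          rw [hfηζ]
          exact Dv_comp_fst hζd p _ _
        rw [h0]
        exact hζ1 i
      have hDfηfun : ∀ i : Fin n, Dv (eiv n i) (fun q : Hn n => (ηb (R⁻¹ • q.1))^2)
          = fun q : Hn n => Dv (EuclideanSpace.single i 1)
              (fun x : En n => ηb (R⁻¹ • x) * ηb (R⁻¹ • x)) q.1 := by
        intro i
        funext q
        rw [hfηζ]
        exact Dv_comp_fst hζd q _ _
      have hDζd : ∀ v : En n, Differentiable ℝ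
          (Dv v (fun x : En n => ηb (R⁻¹ • x) * ηb (R⁻¹ • x))) :=
        fun v y => diffAt_Dv isOpen_univ hζC.contDiffOn v (Set.mem_univ y)
      have hDDfη : ∀ i : Fin n,
          Dv (eiv n i) (Dv (eiv n i) (fun q : Hn n => (ηb (R⁻¹ • q.1))^2)) p
          = Dv (EuclideanSpace.single i 1) (Dv (EuclideanSpace.single i 1)
              (fun x : En n => ηb (R⁻¹ • x) * ηb (R⁻¹ • x))) p.1 := by
        intro i
        rw [hDfηfun i]
        exact Dv_comp_fst (hDζd (EuclideanSpace.single i 1)) p _ _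
      have hDyfη_fun : Dv (eyv n) (fun q : Hn n => (ηb (R⁻¹ • q.1))^2)
          = fun _ : Hn n => (0:ℝ) := by
        funext q
        rw [hfηζ]
        have h0 := Dv_comp_fst (n := n) hζd q (0 : En n) 1
        exact h0.trans ((fderiv ℝ (fun x : En n => ηb (R⁻¹ • x) * ηb (R⁻¹ • x)) q.1).map_zero)
      have hDyfηp : Dv (eyv n) (fun q : Hn n => (ηb (R⁻¹ • q.1))^2) p = 0 := by
        rw [hDyfη_fun]
      have hDDyfη : Dv (eyv n) (Dv (eyv n) (fun q : Hn n => (ηb (R⁻¹ • q.1))^2)) p = 0 := by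
        rw [hDyfη_fun]
        show fderiv ℝ (fun _ : Hn n => (0:ℝ)) p _ = 0
        rw [fderiv_fun_const]
        simp
      -- La of the cutoff factor
      have hLafη : La n a (fun q : Hn n => (ηb (R⁻¹ • q.1))^2) p
          = -(p.2^a) * (∑ i : Fin n,
              (2 * (fderiv ℝ ηb (R⁻¹ • p.1) (R⁻¹ • EuclideanSpace.single i 1))^2
                + 2 * (ηb (R⁻¹ • p.1) * fderiv ℝ (fderiv ℝ ηb) (R⁻¹ • p.1)
                    (R⁻¹ • EuclideanSpace.single i 1) (R⁻¹ • EuclideanSpace.single i 1)))) := by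
        simp only [La]
        have hlap : lapH n (fun q : Hn n => (ηb (R⁻¹ • q.1))^2) p
            = ∑ i : Fin n,
              (2 * (fderiv ℝ ηb (R⁻¹ • p.1) (R⁻¹ • EuclideanSpace.single i 1))^2
                + 2 * (ηb (R⁻¹ • p.1) * fderiv ℝ (fderiv ℝ ηb) (R⁻¹ • p.1)
                    (R⁻¹ • EuclideanSpace.single i 1) (R⁻¹ • EuclideanSpace.single i 1))) := by
          rw [lapH_eq_Dv, hDDyfη, add_zero]
          apply Finset.sum_congr rfl
          intro i _
          rw [hDDfη i, hζ2 i]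
          ring
        have hpy : pdY n (fun q : Hn n => (ηb (R⁻¹ • q.1))^2) p = 0 := hDyfηp
        rw [hlap, hpy]
        ring
      -- La of G = g²
      have hLaG : La n a (fun r => g r * g r) p
          = -(p.2^a) * (2*((∑ i : Fin n, (Dv (eiv n i) g p)^2) + (Dv (eyv n) g p)^2)) := by
        rw [La_mul a hΩ hgsm hgsm hpΩ, hLag p hpΩ]
        have h2 : (∑ i : Fin n, Dv (eiv n i) g p * Dv (eiv n i) g p)
            = ∑ i : Fin n, (Dv (eiv n i) g p)^2 :=
          Finset.sum_congr rfl fun i _ => (pow_two _).symm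
        rw [h2]
        ring
      -- derivatives of G
      have hDG : ∀ v : Hn n, Dv v (fun r => g r * g r) p
          = g p * Dv v g p + g p * Dv v g p := fun v => Dv_mul hgd hgd v
      -- assemble La W
      have hA : La n a (fun q : Hn n => (ηb (R⁻¹ • q.1))^2 * (g q * g q)) p
          = (ηb (R⁻¹ • p.1))^2 * La n a (fun r => g r * g r) p
            + (g p * g p) * La n a (fun q : Hn n => (ηb (R⁻¹ • q.1))^2) p
            - p.2^a * (2*((∑ i : Fin n, Dv (eiv n i) (fun q : Hn n => (ηb (R⁻¹ • q.1))^2) p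
                  * Dv (eiv n i) (fun r => g r * g r) p)
              + Dv (eyv n) (fun q : Hn n => (ηb (R⁻¹ • q.1))^2) p
                  * Dv (eyv n) (fun r => g r * g r) p)) :=
        La_mul a hΩ hfηC.contDiffOn (hgsm.mul hgsm) hpΩ
      have hcross : (∑ i : Fin n, Dv (eiv n i) (fun q : Hn n => (ηb (R⁻¹ • q.1))^2) p
            * Dv (eiv n i) (fun r => g r * g r) p)
          = (4 * g p) * ∑ i : Fin n,
              ηb (R⁻¹ • p.1) * fderiv ℝ ηb (R⁻¹ • p.1) (R⁻¹ • EuclideanSpace.single i 1)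
                * Dv (eiv n i) g p := by
        rw [Finset.mul_sum]
        apply Finset.sum_congr rfl
        intro i _
        rw [hDfη i, hDG (eiv n i)]
        ring
      rw [hA, hcross, hLaG, hLafη, hDyfηp, hDG (eyv n)]
      -- final numeric inequality
      have hbbbd : ∀ i : Fin n,
          |fderiv ℝ ηb (R⁻¹ • p.1) (R⁻¹ • EuclideanSpace.single i 1)| ≤ M * R⁻¹ := by
        intro i
        have h1 := (fderiv ℝ ηb (R⁻¹ • p.1)).le_opNorm (R⁻¹ • EuclideanSpace.single i 1)
        have h2 : ‖(R⁻¹ • EuclideanSpace.single i (1:ℝ) : En n)‖ = R⁻¹ := by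
          rw [norm_smul, Real.norm_eq_abs, abs_of_pos hRinv, EuclideanSpace.norm_single]
          simp
        rw [h2] at h1
        calc |fderiv ℝ ηb (R⁻¹ • p.1) (R⁻¹ • EuclideanSpace.single i 1)|
            ≤ ‖fderiv ℝ ηb (R⁻¹ • p.1)‖ * R⁻¹ := h1
          _ ≤ M * R⁻¹ := by
              apply mul_le_mul_of_nonneg_right (hM (R⁻¹ • p.1)).2.1 (le_of_lt hRinv)
      have hccbd : ∀ i : Fin n,
          |fderiv ℝ (fderiv ℝ ηb) (R⁻¹ • p.1) (R⁻¹ • EuclideanSpace.single i 1)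
            (R⁻¹ • EuclideanSpace.single i 1)| ≤ M * R⁻¹^2 := by
        intro i
        have h2 : ‖(R⁻¹ • EuclideanSpace.single i (1:ℝ) : En n)‖ = R⁻¹ := by
          rw [norm_smul, Real.norm_eq_abs, abs_of_pos hRinv, EuclideanSpace.norm_single]
          simp
        have h1 := (fderiv ℝ (fderiv ℝ ηb) (R⁻¹ • p.1) (R⁻¹ • EuclideanSpace.single i 1)).le_opNorm
          (R⁻¹ • EuclideanSpace.single i 1)
        have h3 := (fderiv ℝ (fderiv ℝ ηb) (R⁻¹ • p.1)).le_opNorm (R⁻¹ • EuclideanSpace.single i 1)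
        rw [h2] at h1 h3
        have h4 : ‖fderiv ℝ (fderiv ℝ ηb) (R⁻¹ • p.1) (R⁻¹ • EuclideanSpace.single i 1)‖
            ≤ M * R⁻¹ := by
          calc ‖fderiv ℝ (fderiv ℝ ηb) (R⁻¹ • p.1) (R⁻¹ • EuclideanSpace.single i 1)‖
              ≤ ‖fderiv ℝ (fderiv ℝ ηb) (R⁻¹ • p.1)‖ * R⁻¹ := h3
            _ ≤ M * R⁻¹ := mul_le_mul_of_nonneg_right (hM (R⁻¹ • p.1)).2.2 (le_of_lt hRinv)
        calc |fderiv ℝ (fderiv ℝ ηb) (R⁻¹ • p.1) (R⁻¹ • EuclideanSpace.single i 1)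
              (R⁻¹ • EuclideanSpace.single i 1)|
            ≤ ‖fderiv ℝ (fderiv ℝ ηb) (R⁻¹ • p.1) (R⁻¹ • EuclideanSpace.single i 1)‖ * R⁻¹ := h1
          _ ≤ (M * R⁻¹) * R⁻¹ := mul_le_mul_of_nonneg_right h4 (le_of_lt hRinv)
          _ = M * R⁻¹^2 := by ring
      have hetbd : |ηb (R⁻¹ • p.1)| ≤ M := (hM (R⁻¹ • p.1)).1
      have hfin := final_ineq n (M := M) (Ri := R⁻¹) (gp := g p) (et := ηb (R⁻¹ • p.1))
        (gy := Dv (eyv n) g p)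
        (fun i => Dv (eiv n i) g p)
        (fun i => fderiv ℝ ηb (R⁻¹ • p.1) (R⁻¹ • EuclideanSpace.single i 1))
        (fun i => fderiv ℝ (fderiv ℝ ηb) (R⁻¹ • p.1) (R⁻¹ • EuclideanSpace.single i 1)
          (R⁻¹ • EuclideanSpace.single i 1))
        hM0 (le_of_lt hRinv) hbbbd hccbd hetbd
      have hmul := mul_le_mul_of_nonneg_left hfin (le_of_lt hya)
      nlinarith [hmul]
  · -- outside the ball: everything vanishes near p
    rw [Set.indicator_of_notMem hloc]
    have hN : IsOpen {q : Hn n | R⁻¹ • q.1 ∉ tsupport ηb} := by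
      have hc : Continuous (fun q : Hn n => R⁻¹ • q.1) := continuous_fst.const_smul R⁻¹
      exact (isClosed_tsupport ηb).isOpen_compl.preimage hc
    have hpN : p ∈ {q : Hn n | R⁻¹ • q.1 ∉ tsupport ηb} := by
      intro hmem
      have h2 := hηbsupp hmem
      simp only [Metric.mem_ball, dist_zero_right] at h2
      have h1 : R/2 ≤ ‖p.1‖ := by
        by_contra h
        exact hloc (by simpa [Metric.mem_ball, dist_zero_right] using lt_of_not_ge h)
      have h3 : ‖R⁻¹ • p.1‖ = R⁻¹ * ‖p.1‖ := by
        rw [norm_smul, Real.norm_eq_abs, abs_of_pos hRinv]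
      rw [h3] at h2
      have h4 : R⁻¹ * (R/2) ≤ R⁻¹ * ‖p.1‖ := by
        apply mul_le_mul_of_nonneg_left h1 (le_of_lt hRinv)
      have h5 : R⁻¹ * (R/2) = 1/2 := by field_simp
      linarith
    have hVf0 : Vf =ᶠ[nhds p] (fun _ => 0) := by
      filter_upwards [hN.mem_nhds hpN] with q hq
      have hz : ηb (R⁻¹ • q.1) = 0 := image_eq_zero_of_notMem_tsupport hq
      simp [hVfdef, hz]
    have hneg : negLapIncH n Vf p = 0 := by
      rw [negLapIncH_congr hVf0, negLapIncH_zero_fun]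
    have hpdY : pdY n Vf p = 0 := by
      show fderiv ℝ Vf p _ = 0
      rw [hVf0.fderiv_eq]
      simp
    rw [hLaIncVf, hneg, hpdY]
    simp

theorem extension_second_derivative_estimate (n : ℕ) (hn : 0 < n) :
    ∃ Cf : ℝ → ℝ, (∀ M : ℝ, 0 < Cf M) ∧
      ∀ (s : ℝ), s ∈ Set.Ioo (0:ℝ) 1 →
      ∀ (u : En n → ℝ), ContDiff ℝ (⊤ : ℕ∞) u →
        (∃ Mu : ℝ, ∀ x, |u x| ≤ Mu ∧ ‖fderiv ℝ u x‖ ≤ Mu ∧ ‖fderiv ℝ (fderiv ℝ u) x‖ ≤ Mu) →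
      ∀ (U : Hn n → ℝ), IsBoundedExtension n (1 - 2*s) u U →
      -- the cutoff `η̄ ∈ C_c^∞(B_{1/2})`, and `η̄_R = η̄(·/R)`
      ∀ (ηb : En n → ℝ),
        ContDiff ℝ (⊤ : ℕ∞) ηb → HasCompactSupport ηb →
        tsupport ηb ⊆ ball (0 : En n) (1/2) →
      ∀ (M : ℝ), C2BddBy n ηb M →
      ∀ (R : ℝ), 0 < R →
      ∀ (e : En n), ‖e‖ = 1 →
      ∀ p : Hn n, 0 < p.2 →
        LaInc n (1 - 2*s)
            (fun q => (ηb (R⁻¹ • q.1))^2 * (max (pdE n e (pdE n e U) q) 0)^2) p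
          ≤ Cf M * (Set.indicator (ball (0 : En n) (R/2)) (fun _ => (1:ℝ)) p.1)
              * R⁻¹^2 * p.2 ^ (1 - 2*s) * (pdE n e (pdE n e U) p)^2 := by
  refine ⟨fun M => 8*n*M^2+1, fun M => by positivity, ?_⟩
  intro s hs u hcu hbu U hU ηb hηbC hηbc hsupp M hM R hR e he p hp
  obtain ⟨hc, hsm, h0, hbd, heq⟩ := hU
  exact main_estimate n hsm (fun q hq => heq q hq) hηbC hsupp hM hR e hp
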